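/- For any probability distribution p = (p_1,...,p_n) with all p_i > 0, the NMIM satisfies L(p) ≥ n - 1, with equality if and only if p is the uniform distribution p_i = 1/n for all i. -/

import Mathlib

open Real Finset

theorem nmim_lower_bound (n : ℕ) (p : Fin n → ℝ)
    (hp : ∀ i, 0 < p i) (hsum : ∑ i, p i = 1) :
    (n : ℝ) - 1 ≤ Real.log (∑ i, p i * Real.exp ((1 - p i) / p i)) ∧
    (Real.log (∑ i, p i * Real.exp ((1 - p i) / p i)) = (n : ℝ) - 1 ↔
      ∀ i, p i = 1 / (n : ℝ)) := by
  have hn : n ≠ 0 := by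
    rintro rfl
    simp at hsum
  have hnpos : (0:ℝ) < n := by positivity
  set c : ℝ := (n : ℝ) - 1 with hc
  set t : Fin n → ℝ := fun i => (1 - p i) / p i with ht
  have hpt : ∀ i, p i * t i = 1 - p i := by
    intro i
    have := (hp i).ne'
    show p i * ((1 - p i) / p i) = 1 - p i
    field_simp
  -- per-term lower bound
  have hterm : ∀ i, Real.exp c * (1 - c * p i) ≤ p i * Real.exp (t i) := by
    intro i
    have h1 : (t i - c) + 1 ≤ Real.exp (t i - c) := Real.add_one_le_exp _
    have h2 : Real.exp (t i) = Real.exp c * Real.exp (t i - c) := by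
      rw [← Real.exp_add]; ring_nf
    have h3 := mul_le_mul_of_nonneg_left h1
      (le_of_lt (mul_pos (hp i) (Real.exp_pos c)))
    rw [h2]
    nlinarith [hpt i, hp i, Real.exp_pos c]
  have hsum1 : ∑ i, (1 - c * p i) = 1 := by
    rw [Finset.sum_sub_distrib, ← Finset.mul_sum, hsum]
    simp only [Finset.sum_const, Finset.card_univ, Fintype.card_fin, nsmul_eq_mul, mul_one]
    rw [hc]; ring
  have hS : Real.exp c ≤ ∑ i, p i * Real.exp (t i) := by
    calc Real.exp c = ∑ i, Real.exp c * (1 - c * p i) := by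
          rw [← Finset.mul_sum, hsum1, mul_one]
      _ ≤ ∑ i, p i * Real.exp (t i) := Finset.sum_le_sum (fun i _ => hterm i)
  have hSpos : 0 < ∑ i, p i * Real.exp (t i) := lt_of_lt_of_le (Real.exp_pos c) hS
  have hteq : ∀ i, p i = 1 / (n:ℝ) ↔ t i = c := by
    intro i
    constructor
    · rintro h
      show (1 - p i) / p i = c
      rw [h, hc]
      field_simp
    · intro h
      have h' : p i * t i = p i * c := by rw [h]
      rw [hpt i] at h'
      have : p i * ((n:ℝ)) = 1 := by rw [hc] at h'; nlinarith
      field_simp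
      linarith [this]
  -- strict inequality if not uniform
  have hstrict : (¬ ∀ i, p i = 1 / (n:ℝ)) → Real.exp c < ∑ i, p i * Real.exp (t i) := by
    intro h
    push_neg at h
    obtain ⟨j, hj⟩ := h
    have htj : t j ≠ c := fun h' => hj ((hteq j).mpr h')
    have hstrictj : Real.exp c * (1 - c * p j) < p j * Real.exp (t j) := by
      have h1 : (t j - c) + 1 < Real.exp (t j - c) :=
        Real.add_one_lt_exp (sub_ne_zero.mpr htj)
      have h2 : Real.exp (t j) = Real.exp c * Real.exp (t j - c) := by
        rw [← Real.exp_add]; ring_nf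
      have h3 := mul_lt_mul_of_pos_left h1 (mul_pos (hp j) (Real.exp_pos c))
      rw [h2]
      nlinarith [hpt j, hp j, Real.exp_pos c]
    calc Real.exp c = ∑ i, Real.exp c * (1 - c * p i) := by
          rw [← Finset.mul_sum, hsum1, mul_one]
      _ < ∑ i, p i * Real.exp (t i) :=
          Finset.sum_lt_sum (fun i _ => hterm i) ⟨j, Finset.mem_univ j, hstrictj⟩
  constructor
  · calc c = Real.log (Real.exp c) := (Real.log_exp c).symm
      _ ≤ Real.log (∑ i, p i * Real.exp (t i)) :=
          Real.log_le_log (Real.exp_pos c) hS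
  · constructor
    · intro hlog
      by_contra h
      have := hstrict h
      have hgt : c < Real.log (∑ i, p i * Real.exp (t i)) := by
        calc c = Real.log (Real.exp c) := (Real.log_exp c).symm
          _ < Real.log (∑ i, p i * Real.exp (t i)) :=
            Real.log_lt_log (Real.exp_pos c) this
      linarith [hgt, hlog.le]
    · intro h
      have hti : ∀ i, t i = c := fun i => (hteq i).mp (h i)
      have : ∑ i, p i * Real.exp (t i) = Real.exp c := by
        calc ∑ i, p i * Real.exp (t i) = ∑ i, p i * Real.exp c := by
              apply Finset.sum_congr rfl; intro i _; rw [hti i]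
          _ = (∑ i, p i) * Real.exp c := by rw [Finset.sum_mul]
          _ = Real.exp c := by rw [hsum, one_mul]
      rw [this, Real.log_exp]
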